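/- Fix matchings H_1, ..., H_d where H_i is a matching on [n] pairing some elements x with x + 2^{a_i} (along dimension i of [n]^d). Consider the graph on [n]^d whose edges are all pairs (u,v) differing in exactly coordinate i with {u_i, v_i} matched in H_i, for some i. Then every connected component of this graph is (graph-isomorphic to) a hypercube: if a vertex x participates in the matchings H_i for exactly the coordinates i in a set K ⊆ [d], then the component of x is a |K|-dimensional hypercube, and all vertices in the component participate in exactly the matchings indexed by K. -/

import Mathlib

/-- Vertex `x` participates in the dimension-`i` matching (lower endpoints `M i`,
step size `2^(a i)`): `x i` is either a lower or an upper endpoint of the matching. -/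
def Participates (d : ℕ) (a : Fin d → ℕ) (M : Fin d → Set ℕ)
    (x : Fin d → ℕ) (i : Fin d) : Prop :=
  x i ∈ M i ∨ ∃ z ∈ M i, x i = z + 2 ^ a i

/-- Adjacency on `[n]^d` induced by the matchings `H_1, …, H_d`: `u` and `v` differ in
exactly one coordinate `i`, along a matched pair of `H_i`. -/
def MatchAdj (d : ℕ) (a : Fin d → ℕ) (M : Fin d → Set ℕ) (u v : Fin d → ℕ) : Prop :=
  ∃ i : Fin d, ((u i ∈ M i ∧ v i = u i + 2 ^ a i) ∨ (v i ∈ M i ∧ u i = v i + 2 ^ a i)) ∧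
    ∀ j, j ≠ i → u j = v j

/-- Hypercube adjacency: differ in exactly one coordinate. -/
def CubeAdj {K : Type*} (u v : K → Bool) : Prop :=
  ∃ i : K, u i ≠ v i ∧ ∀ j, j ≠ i → u j = v j

/-- Fixing for each dimension `i` a matching `H_i` on `[n]` (pairing `z ∈ M i` with
`z + 2^(a i)`), every connected component of the induced graph on `[n]^d` is a
hypercube: if `x` participates exactly in the matchings indexed by
`K = {i | Participates x i}`, then every vertex of the component of `x` participates in
exactly the same matchings, and the component is graph-isomorphic to the
`|K|`-dimensional hypercube. -/
theorem stmt_11 (n d : ℕ) (a : Fin d → ℕ) (M : Fin d → Set ℕ)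
    (hbound : ∀ i, ∀ z ∈ M i, z + 2 ^ a i < n)
    (hmatch : ∀ i, ∀ z ∈ M i, z + 2 ^ a i ∉ M i)
    (x : Fin d → ℕ) (hx : ∀ i, x i < n) :
    (∀ y, Relation.ReflTransGen (MatchAdj d a M) x y →
      ∀ i, (Participates d a M y i ↔ Participates d a M x i)) ∧
    ∃ e : ({i : Fin d // Participates d a M x i} → Bool) ≃
        {y : Fin d → ℕ // Relation.ReflTransGen (MatchAdj d a M) x y},
      ∀ u v, CubeAdj u v ↔ MatchAdj d a M (e u).1 (e v).1 := by
  classical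
  have hp2 : ∀ i : Fin d, 0 < 2 ^ a i := fun i => Nat.pow_pos (by norm_num)
  have key : ∀ i : Fin d, ∃ z, Participates d a M x i →
      z ∈ M i ∧ (x i = z ∨ x i = z + 2 ^ a i) := by
    intro i
    by_cases h : Participates d a M x i
    · rcases h with h | ⟨z, hz, hxz⟩
      · exact ⟨x i, fun _ => ⟨h, Or.inl rfl⟩⟩
      · exact ⟨z, fun _ => ⟨hz, Or.inr hxz⟩⟩
    · exact ⟨0, fun h' => absurd h' h⟩
  choose lo hlo using key
  -- the candidate component set
  let S : (Fin d → ℕ) → Prop := fun y => ∀ i,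
    (Participates d a M x i → (y i = lo i ∨ y i = lo i + 2 ^ a i)) ∧
    (¬ Participates d a M x i → y i = x i)
  have hxS : S x := fun i => ⟨fun h => (hlo i h).2, fun _ => rfl⟩
  have claimA : ∀ y, Relation.ReflTransGen (MatchAdj d a M) x y → S y := by
    intro y hy
    induction hy with
    | refl => exact hxS
    | @tail b c hbc hstep ih =>
      obtain ⟨i, hed, heq⟩ := hstep
      have hPi : Participates d a M x i := by
        by_contra hPi
        have hbx : b i = x i := (ih i).2 hPi
        rcases hed with ⟨hbM, _⟩ | ⟨hcM, hb⟩
        · exact hPi (Or.inl (hbx ▸ hbM))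
        · exact hPi (Or.inr ⟨c i, hcM, hbx ▸ hb⟩)
      have hloM : lo i ∈ M i := (hlo i hPi).1
      have hnm : lo i + 2 ^ a i ∉ M i := hmatch i (lo i) hloM
      have hci : c i = lo i ∨ c i = lo i + 2 ^ a i := by
        rcases (ih i).1 hPi with hb | hb
        · rcases hed with ⟨hbM, hc⟩ | ⟨hcM, hbc'⟩
          · exact Or.inr (by rw [hc, hb])
          · exact absurd (show c i + 2 ^ a i ∈ M i by rw [← hbc', hb]; exact hloM)
              (hmatch i (c i) hcM)
        · rcases hed with ⟨hbM, _⟩ | ⟨_, hbc'⟩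
          · exact absurd (hb ▸ hbM) hnm
          · exact Or.inl (by omega)
      intro j
      by_cases hj : j = i
      · subst hj
        exact ⟨fun _ => hci, fun h => absurd hPi h⟩
      · have hcb : c j = b j := (heq j hj).symm
        exact ⟨fun h => hcb ▸ (ih j).1 h, fun h => hcb ▸ (ih j).2 h⟩
  have claimB : ∀ (m : ℕ) (y : Fin d → ℕ), S y →
      (Finset.univ.filter fun i => y i ≠ x i).card ≤ m →
      Relation.ReflTransGen (MatchAdj d a M) x y := by
    intro m
    induction m with
    | zero =>
      intro y hyS hcard
      have hyx : y = x := by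
        funext i
        by_contra hne
        have hmem : i ∈ Finset.univ.filter (fun i => y i ≠ x i) := by simp [hne]
        have := Finset.card_pos.mpr ⟨i, hmem⟩
        omega
      rw [hyx]
    | succ m ih =>
      intro y hyS hcard
      by_cases hyx : y = x
      · rw [hyx]
      · have hex : ∃ i, y i ≠ x i := by
          by_contra h; push_neg at h; exact hyx (funext h)
        obtain ⟨i, hi⟩ := hex
        set y' := Function.update y i (x i) with hy'
        have hy'i : y' i = x i := Function.update_self _ _ _
        have hy'j : ∀ j, j ≠ i → y' j = y j := fun j hj => Function.update_of_ne hj _ _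
        have hy'S : S y' := by
          intro j
          by_cases hj : j = i
          · subst hj
            rw [hy'i]
            exact hxS j
          · rw [hy'j j hj]
            exact hyS j
        have hmem : i ∈ Finset.univ.filter (fun j => y j ≠ x j) := by simp [hi]
        have hsub : (Finset.univ.filter fun j => y' j ≠ x j) ⊆
            (Finset.univ.filter fun j => y j ≠ x j).erase i := by
          intro j hj
          simp only [Finset.mem_filter, Finset.mem_univ, true_and] at hj
          have hji : j ≠ i := by
            intro e; subst e; exact hj hy'i
          rw [Finset.mem_erase]
          refine ⟨hji, ?_⟩
          simp only [Finset.mem_filter, Finset.mem_univ, true_and]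
          rw [← hy'j j hji]; exact hj
        have hcard' : (Finset.univ.filter fun j => y' j ≠ x j).card ≤ m := by
          have h1 := Finset.card_le_card hsub
          have h2 := Finset.card_erase_of_mem hmem
          have h3 := Finset.card_pos.mpr ⟨i, hmem⟩
          omega
        have hPi : Participates d a M x i := by
          by_contra hPi
          exact hi ((hyS i).2 hPi)
        have hloM : lo i ∈ M i := (hlo i hPi).1
        have hstep : MatchAdj d a M y' y := by
          refine ⟨i, ?_, fun j hj => hy'j j hj⟩
          rcases (hxS i).1 hPi with hxi | hxi
          · have hyi : y i = lo i + 2 ^ a i := by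
              rcases (hyS i).1 hPi with h | h
              · exact absurd (h.trans hxi.symm) hi
              · exact h
            exact Or.inl ⟨by rw [hy'i, hxi]; exact hloM, by rw [hyi, hy'i, hxi]⟩
          · have hyi : y i = lo i := by
              rcases (hyS i).1 hPi with h | h
              · exact h
              · exact absurd (h.trans hxi.symm) hi
            exact Or.inr ⟨by rw [hyi]; exact hloM, by rw [hyi, hy'i, hxi]⟩
        exact (ih y' hy'S hcard').tail hstep
  constructor
  · intro y hy i
    have hyS := claimA y hy
    by_cases hPi : Participates d a M x i
    · constructor
      · intro _; exact hPi
      · intro _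
        rcases (hyS i).1 hPi with h | h
        · exact Or.inl (by rw [h]; exact (hlo i hPi).1)
        · exact Or.inr ⟨lo i, (hlo i hPi).1, h⟩
    · have hyx : y i = x i := (hyS i).2 hPi
      unfold Participates
      rw [hyx]
  · -- the equivalence
    let F : ({i : Fin d // Participates d a M x i} → Bool) → (Fin d → ℕ) :=
      fun u i => if h : Participates d a M x i then
        (if u ⟨i, h⟩ then lo i + 2 ^ a i else lo i) else x i
    have hFS : ∀ u, S (F u) := by
      intro u i
      by_cases h : Participates d a M x i
      · refine ⟨fun _ => ?_, fun h' => absurd h h'⟩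
        simp only [F, dif_pos h]
        by_cases hu : u ⟨i, h⟩ <;> simp [hu]
      · exact ⟨fun h' => absurd h' h, fun _ => by simp [F, dif_neg h]⟩
    have hFreach : ∀ u, Relation.ReflTransGen (MatchAdj d a M) x (F u) :=
      fun u => claimB _ (F u) (hFS u) le_rfl
    have hne : ∀ i : Fin d, lo i ≠ lo i + 2 ^ a i := by
      intro i; have := hp2 i; omega
    refine ⟨⟨fun u => ⟨F u, hFreach u⟩,
        fun y => fun i0 => decide (y.1 i0.1 = lo i0.1 + 2 ^ a i0.1), ?_, ?_⟩, ?_⟩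
    · intro u
      funext i0
      obtain ⟨i, h⟩ := i0
      simp only [F, dif_pos h]
      by_cases hu : u ⟨i, h⟩
      · simp [hu]
      · simp only [Bool.not_eq_true] at hu
        rw [hu]
        simp only [if_false, Bool.false_eq, decide_eq_false_iff_not]
        exact hne i
    · intro y
      apply Subtype.ext
      funext i
      have hyS := claimA y.1 y.2
      by_cases h : Participates d a M x i
      · simp only [F, dif_pos h]
        rcases (hyS i).1 h with hv | hv
        · rw [if_neg, hv]
          simp only [decide_eq_true_eq]
          rw [hv]; exact hne i
        · rw [if_pos, hv]
          simp only [decide_eq_true_eq]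
          exact hv
      · simp only [F, dif_neg h]
        exact ((hyS i).2 h).symm
    · intro u v
      show CubeAdj u v ↔ MatchAdj d a M (F u) (F v)
      constructor
      · rintro ⟨⟨i, h⟩, hnuv, heq⟩
        refine ⟨i, ?_, ?_⟩
        · have hloM := (hlo i h).1
          simp only [F, dif_pos h]
          cases hu : u ⟨i, h⟩ <;> cases hv : v ⟨i, h⟩ <;>
            first
            | (exfalso; rw [hu, hv] at hnuv; exact hnuv rfl)
            | exact Or.inl ⟨hloM, rfl⟩
            | exact Or.inr ⟨hloM, rfl⟩
        · intro j hj
          by_cases hPj : Participates d a M x j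
          · have : u ⟨j, hPj⟩ = v ⟨j, hPj⟩ := by
              apply heq
              intro e
              exact hj (congrArg Subtype.val e)
            simp only [F, dif_pos hPj, this]
          · simp only [F, dif_neg hPj]
      · rintro ⟨i, hed, heq⟩
        have h : Participates d a M x i := by
          by_contra h
          have h1 : F u i = x i := by simp [F, dif_neg h]
          have h2 : F v i = x i := by simp [F, dif_neg h]
          have := hp2 i
          rcases hed with ⟨_, hc⟩ | ⟨_, hc⟩ <;> omega
        refine ⟨⟨i, h⟩, ?_, ?_⟩
        · intro hEq
          have hFeq : F u i = F v i := by
            simp only [F, dif_pos h, hEq]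
          have := hp2 i
          rcases hed with ⟨_, hc⟩ | ⟨_, hc⟩ <;> omega
        · rintro ⟨j, hPj⟩ hj0
          have hji : j ≠ i := fun e => hj0 (Subtype.ext e)
          have hFeq : F u j = F v j := heq j hji
          simp only [F, dif_pos hPj] at hFeq
          have := hne j
          cases hu : u ⟨j, hPj⟩ <;> cases hv : v ⟨j, hPj⟩ <;>
            rw [hu, hv] at hFeq <;> simp_all
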